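/- Let k ≥ 4 be an integer and let G be a 3-connected k-regular graph. Let u, v be vertices of G and (w1, w2) an eligible pair of neighbours of v, with {w1,w2} disjoint from the neighbourhood of u. If for every eligible pair (t1, t2) of neighbours of u there exists a proper k-colouring of G in which t1, t2 are coloured alike and w1, w2 are coloured alike, then the set of proper k-colourings of G forms a single Kempe class. -/

import Mathlib

open SimpleGraph
open scoped Classical

variable {V : Type*}

/-- A proper `k`-colouring of `G`. -/
def IsProperColoring (G : SimpleGraph V) (k : ℕ) (c : V → Fin k) : Prop :=
  ∀ ⦃u v : V⦄, G.Adj u v → c u ≠ c v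

/-- `c'` is obtained from `c` by a single Kempe change: the colours `a` and `b` are
swapped on the connected component (of the subgraph induced by the vertices coloured
`a` or `b`) containing `v0`, and all other vertices keep their colour. -/

def KempeStep (G : SimpleGraph V) (k : ℕ) (c c' : V → Fin k) : Prop :=
  ∃ a b : Fin k, ∃ v0 : {x : V | c x = a ∨ c x = b},
    ∀ v : V, c' v =
      if h : c v = a ∨ c v = b then
        if (G.induce {x : V | c x = a ∨ c x = b}).Reachable v0 ⟨v, h⟩
          then Equiv.swap a b (c v) else c v
      else c v

/-- Two colourings are Kempe equivalent if one is obtained from the other by a finite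
sequence of Kempe changes. -/
def KempeEquiv (G : SimpleGraph V) (k : ℕ) (c c' : V → Fin k) : Prop :=
  Relation.ReflTransGen (KempeStep G k) c c'

/-- The set of all proper `k`-colourings of `G` forms a single Kempe class. -/
def KempeClass (G : SimpleGraph V) (k : ℕ) : Prop :=
  ∀ c c' : V → Fin k, IsProperColoring G k c → IsProperColoring G k c' →
    KempeEquiv G k c c'

/-- `G` is `d`-degenerate: every nonempty set of vertices contains a vertex with at
most `d` neighbours inside the set. -/
def Degenerate (G : SimpleGraph V) (d : ℕ) : Prop :=
  ∀ S : Set V, S.Nonempty → ∃ v ∈ S, (S ∩ G.neighborSet v).ncard ≤ d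

/-- `G` is 3-connected: more than 3 vertices, and deleting any at most 2 vertices
leaves it connected. -/
def ThreeConnected [Fintype V] (G : SimpleGraph V) : Prop :=
  3 < Fintype.card V ∧ ∀ S : Set V, S.ncard ≤ 2 → (G.induce Sᶜ).Connected

/-- walk staying in a set closed under adjacency -/
lemma walk_closed {H : SimpleGraph V} {A : Set V}
    (hA : ∀ p ∈ A, ∀ q, H.Adj p q → q ∈ A) :
    ∀ {p q : V}, H.Reachable p q → p ∈ A → q ∈ A := by
  intro p q hr hp
  rcases hr with ⟨w⟩
  induction w with
  | nil => exact hp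
  | cons h w ih => exact ih (hA _ hp _ h)

lemma crossing {H : SimpleGraph V} (hconn : H.Connected) {A : Set V}
    (h1 : A.Nonempty) (h2 : ∃ q, q ∉ A) : ∃ p ∈ A, ∃ q, q ∉ A ∧ H.Adj p q := by
  by_contra hc
  push_neg at hc
  obtain ⟨p, hp⟩ := h1
  obtain ⟨q, hq⟩ := h2
  refine hq (walk_closed (fun p hp q hadj => ?_) (hconn.preconnected p q) hp)
  by_contra hq'
  exact hc p hp q hq' hadj

noncomputable def PSwap (k : ℕ) (a b : Fin k) (D : Set V) (c : V → Fin k) : V → Fin k :=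
  fun w => if w ∈ D then Equiv.swap a b (c w) else c w

def PStep (H : SimpleGraph V) (k : ℕ) (x y : V) (c c' : V → Fin k) : Prop :=
  ∃ a b : Fin k, ∃ D : Set V,
    (∀ w ∈ D, c w = a ∨ c w = b) ∧
    (∀ p ∈ D, ∀ q, H.Adj p q → (c q = a ∨ c q = b) → q ∈ D) ∧
    (x ∈ D ↔ y ∈ D) ∧ c' = PSwap k a b D c

lemma swap_mem {k : ℕ} {a b t : Fin k} (h : t = a ∨ t = b) :
    Equiv.swap a b t = a ∨ Equiv.swap a b t = b := by
  rcases h with rfl | rfl <;> simp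

lemma swap_mem_iff {k : ℕ} {a b t : Fin k} :
    (Equiv.swap a b t = a ∨ Equiv.swap a b t = b) ↔ (t = a ∨ t = b) := by
  constructor
  · intro h
    have := swap_mem h
    rwa [Equiv.swap_apply_self] at this
  · exact swap_mem

lemma PStep.proper {H : SimpleGraph V} {k : ℕ} {x y : V} {c c' : V → Fin k}
    (h : PStep H k x y c c') (hc : IsProperColoring H k c) : IsProperColoring H k c' := by
  obtain ⟨a, b, D, hsub, hcl, hxy, rfl⟩ := h
  intro p q hadj
  unfold PSwap
  by_cases hp : p ∈ D <;> by_cases hq : q ∈ D <;> simp only [hp, hq, if_pos, if_neg, if_true, if_false]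
  · exact fun hh => hc hadj (Equiv.injective _ hh)
  · have hq' : ¬(c q = a ∨ c q = b) := fun hh => hq (hcl p hp q hadj hh)
    intro hh
    exact hq' (hh ▸ swap_mem (hsub p hp))
  · have hp' : ¬(c p = a ∨ c p = b) := fun hh => hp (hcl q hq p hadj.symm hh)
    intro hh
    rcases swap_mem (hsub q hq) with h1 | h1
    · exact hp' (Or.inl (hh.trans h1))
    · exact hp' (Or.inr (hh.trans h1))
  · exact hc hadj

lemma PStep.pair {H : SimpleGraph V} {k : ℕ} {x y : V} {c c' : V → Fin k}
    (h : PStep H k x y c c') (hc : c x = c y) : c' x = c' y := by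
  obtain ⟨a, b, D, hsub, hcl, hxy, rfl⟩ := h
  unfold PSwap
  by_cases hx : x ∈ D
  · rw [if_pos hx, if_pos (hxy.mp hx), hc]
  · rw [if_neg hx, if_neg (fun hy => hx (hxy.mpr hy)), hc]

lemma PStep.symm {H : SimpleGraph V} {k : ℕ} {x y : V} {c c' : V → Fin k}
    (h : PStep H k x y c c') : PStep H k x y c' c := by
  obtain ⟨a, b, D, hsub, hcl, hxy, rfl⟩ := h
  refine ⟨a, b, D, ?_, ?_, hxy, ?_⟩
  · intro w hw
    unfold PSwap
    rw [if_pos hw]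
    exact swap_mem (hsub w hw)
  · intro p hp q hadj hq
    apply hcl p hp q hadj
    unfold PSwap at hq
    by_cases hqD : q ∈ D
    · exact hsub q hqD
    · rwa [if_neg hqD] at hq
  · funext w
    unfold PSwap
    by_cases hw : w ∈ D
    · rw [if_pos hw, if_pos hw, Equiv.swap_apply_self]
    · rw [if_neg hw, if_neg hw]

lemma pswap_kempe [Fintype V] (H : SimpleGraph V) (k : ℕ) :
    ∀ (n : ℕ) (c : V → Fin k) (a b : Fin k) (D : Set V), D.ncard ≤ n →
    (∀ w ∈ D, c w = a ∨ c w = b) →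
    (∀ p ∈ D, ∀ q, H.Adj p q → (c q = a ∨ c q = b) → q ∈ D) →
    KempeEquiv H k c (PSwap k a b D c) := by
  intro n
  induction n with
  | zero =>
    intro c a b D hcard hsub hcl
    have hD : D = ∅ := by
      rw [← Set.ncard_eq_zero (D.toFinite)]
      omega
    subst hD
    have : PSwap k a b (∅ : Set V) c = c := by
      funext w; simp [PSwap]
    rw [this]
    exact Relation.ReflTransGen.refl
  | succ n ih =>
    intro c a b D hcard hsub hcl
    rcases D.eq_empty_or_nonempty with hD | ⟨v0, hv0⟩
    · subst hD
      have : PSwap k a b (∅ : Set V) c = c := by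
        funext w; simp [PSwap]
      rw [this]
      exact Relation.ReflTransGen.refl
    · set Ab : Set V := {w : V | c w = a ∨ c w = b} with hAb
      have hv0' : v0 ∈ Ab := hsub v0 hv0
      set C : Set V := {w : V | ∃ h : c w = a ∨ c w = b,
        (H.induce Ab).Reachable ⟨v0, hv0'⟩ ⟨w, h⟩} with hC
      have hCsubAb : ∀ w ∈ C, c w = a ∨ c w = b := fun w hw => hw.1
      have hCcl : ∀ p ∈ C, ∀ q, H.Adj p q → (c q = a ∨ c q = b) → q ∈ C := by
        rintro p ⟨hp, hrp⟩ q hadj hq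
        exact ⟨hq, hrp.trans (SimpleGraph.Adj.reachable (by exact hadj))⟩
      have hv0C : v0 ∈ C := ⟨hv0', SimpleGraph.Reachable.refl _⟩
      have hCD : C ⊆ D := by
        intro w hw
        obtain ⟨hwAb, hr⟩ := hw
        exact walk_closed (H := H.induce Ab) (A := {u : ↥Ab | (u : V) ∈ D})
          (by intro p hp q hadj; exact hcl ↑p hp ↑q hadj q.2) hr hv0
      set c₁ : V → Fin k := PSwap k a b C c with hc₁
      have step1 : KempeStep H k c c₁ := by
        refine ⟨a, b, ⟨v0, hv0'⟩, fun w => ?_⟩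
        by_cases h : c w = a ∨ c w = b
        · rw [dif_pos h]
          by_cases hr : (H.induce Ab).Reachable ⟨v0, hv0'⟩ ⟨w, h⟩
          · rw [if_pos hr]
            have hwC : w ∈ C := ⟨h, hr⟩
            simp [hc₁, PSwap, hwC]
          · rw [if_neg hr]
            have hwC : w ∉ C := fun ⟨h', hr'⟩ => hr hr'
            simp [hc₁, PSwap, hwC]
        · rw [dif_neg h]
          have hwC : w ∉ C := fun hw => h hw.1
          simp [hc₁, PSwap, hwC]
      set D' : Set V := D \ C with hD'
      have hcard' : D'.ncard ≤ n := by
        have h1 : D' ⊆ D \ {v0} := fun w hw => ⟨hw.1, fun hh => hw.2 (hh ▸ hv0C)⟩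
        have h2 : D'.ncard ≤ (D \ {v0}).ncard := Set.ncard_le_ncard h1 (Set.toFinite _)
        have h3 : (D \ {v0}).ncard = D.ncard - 1 := Set.ncard_diff_singleton_of_mem hv0
        have h4 : 0 < D.ncard := (Set.ncard_pos (D.toFinite)).mpr ⟨v0, hv0⟩
        omega
      have hsub' : ∀ w ∈ D', c₁ w = a ∨ c₁ w = b := by
        intro w hw
        have : c₁ w = c w := by simp [hc₁, PSwap, hw.2]
        rw [this]
        exact hsub w hw.1
      have hcl' : ∀ p ∈ D', ∀ q, H.Adj p q → (c₁ q = a ∨ c₁ q = b) → q ∈ D' := by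
        intro p hp q hadj hq
        have hqab : c q = a ∨ c q = b := by
          by_cases hqC : q ∈ C
          · exact hqC.1
          · simpa [hc₁, PSwap, hqC] using hq
        have hqD : q ∈ D := hcl p hp.1 q hadj hqab
        have hqC : q ∉ C := by
          intro hqC
          exact hp.2 (hCcl q hqC p hadj.symm (hsub p hp.1))
        exact ⟨hqD, hqC⟩
      have key := ih c₁ a b D' hcard' hsub' hcl'
      have hfinal : PSwap k a b D' c₁ = PSwap k a b D c := by
        funext w
        by_cases hwC : w ∈ C
        · have hwD : w ∈ D := hCD hwC
          have hwD' : w ∉ D' := fun hh => hh.2 hwC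
          simp [PSwap, hc₁, hwC, hwD, hwD']
        · by_cases hwD : w ∈ D
          · have hwD' : w ∈ D' := ⟨hwD, hwC⟩
            simp [PSwap, hc₁, hwC, hwD, hwD']
          · have hwD' : w ∉ D' := fun hh => hwD hh.1
            simp [PSwap, hc₁, hwC, hwD, hwD']
      rw [hfinal] at key
      exact Relation.ReflTransGen.head step1 key

lemma PStep.kempe [Fintype V] {H : SimpleGraph V} {k : ℕ} {x y : V} {c c' : V → Fin k}
    (h : PStep H k x y c c') : KempeEquiv H k c c' := by
  obtain ⟨a, b, D, hsub, hcl, hxy, rfl⟩ := h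
  exact pswap_kempe H k D.ncard c a b D le_rfl hsub hcl

lemma chain_kempe [Fintype V] {H : SimpleGraph V} {k : ℕ} {x y : V} {c c' : V → Fin k}
    (h : Relation.ReflTransGen (PStep H k x y) c c') : KempeEquiv H k c c' := by
  induction h with
  | refl => exact Relation.ReflTransGen.refl
  | tail _ hstep ih => exact ih.trans hstep.kempe

lemma chain_proper {H : SimpleGraph V} {k : ℕ} {x y : V} {c c' : V → Fin k}
    (h : Relation.ReflTransGen (PStep H k x y) c c') (hc : IsProperColoring H k c) :
    IsProperColoring H k c' := by
  induction h with
  | refl => exact hc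
  | tail _ hstep ih => exact hstep.proper ih

lemma chain_pair {H : SimpleGraph V} {k : ℕ} {x y : V} {c c' : V → Fin k}
    (h : Relation.ReflTransGen (PStep H k x y) c c') (hc : c x = c y) : c' x = c' y := by
  induction h with
  | refl => exact hc
  | tail _ hstep ih => exact hstep.pair ih

lemma image_card_one_collision {α β : Type*} [DecidableEq α] [DecidableEq β]
    (N : Finset α) (e : α → β) (s t : α) (hs : s ∈ N) (ht : t ∈ N) (hst : s ≠ t)
    (h1 : e s = e t) : (N.image e).card + 1 ≤ N.card := by
  have hsub : N.image e ⊆ (N.erase s).image e := by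
    intro v hv
    obtain ⟨w, hw, rfl⟩ := Finset.mem_image.mp hv
    by_cases hws : w = s
    · subst hws
      exact Finset.mem_image.mpr ⟨t, Finset.mem_erase.mpr ⟨hst.symm, ht⟩, h1.symm⟩
    · exact Finset.mem_image.mpr ⟨w, Finset.mem_erase.mpr ⟨hws, hw⟩, rfl⟩
  have h2 := Finset.card_le_card hsub
  have h3 := Finset.card_image_le (s := N.erase s) (f := e)
  have h4 := Finset.card_erase_of_mem hs
  have h5 : 0 < N.card := Finset.card_pos.mpr ⟨s, hs⟩
  omega

lemma image_card_two_collisions {α β : Type*} [DecidableEq α] [DecidableEq β]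
    (N : Finset α) (e : α → β) (s t s' t' : α) (hs : s ∈ N) (ht : t ∈ N)
    (hs' : s' ∈ N) (ht' : t' ∈ N)
    (h1 : e s = e t) (h2 : e s' = e t') (hss' : s ≠ s')
    (hts : t ≠ s) (hts' : t ≠ s') (ht's : t' ≠ s) (ht's' : t' ≠ s') :
    (N.image e).card + 2 ≤ N.card := by
  have hsub : N.image e ⊆ ((N.erase s).erase s').image e := by
    intro v hv
    obtain ⟨w, hw, rfl⟩ := Finset.mem_image.mp hv
    by_cases hws : w = s
    · subst hws
      exact Finset.mem_image.mpr ⟨t, Finset.mem_erase.mpr ⟨hts', Finset.mem_erase.mpr ⟨hts, ht⟩⟩, h1.symm⟩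
    · by_cases hws' : w = s'
      · subst hws'
        exact Finset.mem_image.mpr ⟨t', Finset.mem_erase.mpr ⟨ht's', Finset.mem_erase.mpr ⟨ht's, ht'⟩⟩, h2.symm⟩
      · exact Finset.mem_image.mpr ⟨w, Finset.mem_erase.mpr ⟨hws', Finset.mem_erase.mpr ⟨hws, hw⟩⟩, rfl⟩
  have hc2 := Finset.card_le_card hsub
  have hc3 := Finset.card_image_le (s := (N.erase s).erase s') (f := e)
  have hc4 := Finset.card_erase_of_mem hs
  have hc5 : s' ∈ N.erase s := Finset.mem_erase.mpr ⟨hss'.symm, hs'⟩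
  have hc6 := Finset.card_erase_of_mem hc5
  have hc7 : 0 < N.card := Finset.card_pos.mpr ⟨s, hs⟩
  have hc8 : 0 < (N.erase s).card := Finset.card_pos.mpr ⟨s', hc5⟩
  omega

lemma exists_fresh {k : ℕ} (F : Finset (Fin k)) (h : F.card < k) : ∃ f, f ∉ F := by
  by_contra h'
  push_neg at h'
  have hsub : (Finset.univ : Finset (Fin k)) ⊆ F := fun f _ => h' f
  have := Finset.card_le_card hsub
  simp at this
  omega

lemma mem_image_val {S : Set V} {D : Set ↥S} (w : ↥S) :
    ((w : V) ∈ (Subtype.val '' D : Set V)) ↔ w ∈ D :=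
  Subtype.coe_injective.mem_set_image

lemma val_ne_z {z : V} (w : ↥({z}ᶜ : Set V)) : (w : V) ≠ z := w.2

lemma liftA {H : SimpleGraph V} {k : ℕ} {x y z : V}
    (hxmem : x ∈ ({z}ᶜ : Set V)) (hymem : y ∈ ({z}ᶜ : Set V))
    {a b : Fin k} {D : Set ↥({z}ᶜ : Set V)} {d d' : ↥({z}ᶜ : Set V) → Fin k}
    (hsub : ∀ w ∈ D, d w = a ∨ d w = b)
    (hcl : ∀ p ∈ D, ∀ q, (H.induce {z}ᶜ).Adj p q → (d q = a ∨ d q = b) → q ∈ D)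
    (hDxy : (⟨x, hxmem⟩ : ↥({z}ᶜ : Set V)) ∈ D ↔ (⟨y, hymem⟩ : ↥({z}ᶜ : Set V)) ∈ D)
    (hd' : d' = PSwap k a b D d)
    (e₁ : V → Fin k) (hres₁ : ∀ w : ↥({z}ᶜ : Set V), e₁ ↑w = d w)
    (hcz : ∀ p ∈ (Subtype.val '' D : Set V), H.Adj p z → ¬(e₁ z = a ∨ e₁ z = b)) :
    PStep H k x y e₁ (PSwap k a b (Subtype.val '' D) e₁) ∧
      ∀ w : ↥({z}ᶜ : Set V), PSwap k a b (Subtype.val '' D) e₁ ↑w = d' w := by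
  constructor
  · refine ⟨a, b, Subtype.val '' D, ?_, ?_, ?_, rfl⟩
    · rintro w ⟨w', hw', rfl⟩
      rw [hres₁]
      exact hsub w' hw'
    · intro p hp q hadj hq
      by_cases hqz : q = z
      · subst hqz
        exact absurd hq (hcz p hp hadj)
      · obtain ⟨p', hp', rfl⟩ := hp
        have hqmem : q ∈ ({z}ᶜ : Set V) := hqz
        have : (⟨q, hqmem⟩ : ↥({z}ᶜ : Set V)) ∈ D := by
          refine hcl p' hp' ⟨q, hqmem⟩ hadj ?_
          rw [← hres₁ ⟨q, hqmem⟩]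
          exact hq
        exact ⟨⟨q, hqmem⟩, this, rfl⟩
    · exact (mem_image_val ⟨x, hxmem⟩).trans (hDxy.trans (mem_image_val ⟨y, hymem⟩).symm)
  · intro w
    rw [hd']
    unfold PSwap
    by_cases hw : w ∈ D
    · rw [if_pos hw, if_pos ((mem_image_val w).mpr hw), hres₁ w]
    · rw [if_neg hw, if_neg (fun hh => hw ((mem_image_val w).mp hh)), hres₁ w]

lemma liftB {H : SimpleGraph V} {k : ℕ} {x y z : V}
    (hxmem : x ∈ ({z}ᶜ : Set V)) (hymem : y ∈ ({z}ᶜ : Set V))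
    {a b : Fin k} {D : Set ↥({z}ᶜ : Set V)} {d d' : ↥({z}ᶜ : Set V) → Fin k}
    (hsub : ∀ w ∈ D, d w = a ∨ d w = b)
    (hcl : ∀ p ∈ D, ∀ q, (H.induce {z}ᶜ).Adj p q → (d q = a ∨ d q = b) → q ∈ D)
    (hDxy : (⟨x, hxmem⟩ : ↥({z}ᶜ : Set V)) ∈ D ↔ (⟨y, hymem⟩ : ↥({z}ᶜ : Set V)) ∈ D)
    (hd' : d' = PSwap k a b D d)
    (e₁ : V → Fin k) (hres₁ : ∀ w : ↥({z}ᶜ : Set V), e₁ ↑w = d w)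
    (hez : e₁ z = a ∨ e₁ z = b)
    (hall : ∀ q, H.Adj z q → (e₁ q = a ∨ e₁ q = b) → q ∈ (Subtype.val '' D : Set V)) :
    PStep H k x y e₁ (PSwap k a b (Subtype.val '' D ∪ {z}) e₁) ∧
      ∀ w : ↥({z}ᶜ : Set V), PSwap k a b (Subtype.val '' D ∪ {z}) e₁ ↑w = d' w := by
  have hmemU : ∀ w : ↥({z}ᶜ : Set V),
      ((w : V) ∈ (Subtype.val '' D ∪ {z} : Set V)) ↔ w ∈ D := by
    intro w
    constructor
    · rintro (hw | hw)
      · exact (mem_image_val w).mp hw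
      · exact absurd hw (val_ne_z w)
    · intro hw
      exact Or.inl ((mem_image_val w).mpr hw)
  constructor
  · refine ⟨a, b, Subtype.val '' D ∪ {z}, ?_, ?_, ?_, rfl⟩
    · rintro w (⟨w', hw', rfl⟩ | hw)
      · rw [hres₁]
        exact hsub w' hw'
      · rw [hw]
        exact hez
    · rintro p (hp | hp) q hadj hq
      · by_cases hqz : q = z
        · exact Or.inr hqz
        · obtain ⟨p', hp', rfl⟩ := hp
          have hqmem : q ∈ ({z}ᶜ : Set V) := hqz
          refine Or.inl ⟨⟨q, hqmem⟩, hcl p' hp' ⟨q, hqmem⟩ hadj ?_, rfl⟩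
          rw [← hres₁ ⟨q, hqmem⟩]
          exact hq
      · rw [Set.mem_singleton_iff] at hp
        subst hp
        exact Or.inl (hall q hadj hq)
    · exact (hmemU ⟨x, hxmem⟩).trans (hDxy.trans (hmemU ⟨y, hymem⟩).symm)
  · intro w
    rw [hd']
    unfold PSwap
    by_cases hw : w ∈ D
    · rw [if_pos hw, if_pos ((hmemU w).mpr hw), hres₁ w]
    · rw [if_neg hw, if_neg (fun hh => hw ((hmemU w).mp hh)), hres₁ w]

lemma pswap_comm {k : ℕ} (a b : Fin k) (D : Set V) (c : V → Fin k) :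
    PSwap k a b D c = PSwap k b a D c := by
  funext w
  unfold PSwap
  rw [Equiv.swap_comm]

lemma lift_step [Fintype V] {H : SimpleGraph V} {k : ℕ} (hk : 4 ≤ k) {x y z : V}
    (hxz : x ≠ z) (hyz : y ≠ z) (hxy : x ≠ y)
    (hxmem : x ∈ ({z}ᶜ : Set V)) (hymem : y ∈ ({z}ᶜ : Set V))
    (hdegz : (H.neighborSet z).ncard ≤ k - 1 ∨ (H.Adj z x ∧ H.Adj z y))
    (hdeg : (H.neighborSet z).ncard ≤ k)
    {d d' : ↥({z}ᶜ : Set V) → Fin k}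
    (hstep : PStep (H.induce {z}ᶜ) k ⟨x, hxmem⟩ ⟨y, hymem⟩ d d')
    {e : V → Fin k} (he : IsProperColoring H k e)
    (hres : ∀ w : ↥({z}ᶜ : Set V), e ↑w = d w)
    (hexy : e x = e y) :
    ∃ e', IsProperColoring H k e' ∧ (∀ w : ↥({z}ᶜ : Set V), e' ↑w = d' w) ∧
      Relation.ReflTransGen (PStep H k x y) e e' := by
  obtain ⟨a, b, D, hsub, hcl, hDxy, hd'⟩ := hstep
  by_cases hez : e z = a ∨ e z = b
  · by_cases hab : a = b
    · subst hab
      refine ⟨e, he, fun w => ?_, Relation.ReflTransGen.refl⟩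
      rw [hd']
      unfold PSwap
      by_cases hw : w ∈ D
      · rw [if_pos hw, Equiv.swap_self, Equiv.refl_apply, hres w]
      · rw [if_neg hw, hres w]
    · -- main case: e z ∈ {a,b}, a ≠ b
      have hmain : ∀ a' b' : Fin k, a' ≠ b' → e z = a' →
          (∀ w ∈ D, d w = a' ∨ d w = b') →
          (∀ p ∈ D, ∀ q, (H.induce {z}ᶜ).Adj p q → (d q = a' ∨ d q = b') → q ∈ D) →
          d' = PSwap k a' b' D d →
          ∃ e', IsProperColoring H k e' ∧ (∀ w : ↥({z}ᶜ : Set V), e' ↑w = d' w) ∧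
            Relation.ReflTransGen (PStep H k x y) e e' := by
        clear hsub hcl hd' hez hab
        intro a b hab heza hsub hcl hd'
        set D₀ : Set V := Subtype.val '' D with hD₀
        by_cases hall : ∀ q, H.Adj z q → (e q = a ∨ e q = b) → q ∈ D₀
        · obtain ⟨hP, hres'⟩ := liftB hxmem hymem hsub hcl hDxy hd' e hres (Or.inl heza) hall
          exact ⟨_, hP.proper he, hres', Relation.ReflTransGen.single hP⟩
        · push_neg at hall
          obtain ⟨q₀, hq₀adj, hq₀col, hq₀D⟩ := hall
          have hq₀b : e q₀ = b := by
            rcases hq₀col with h | h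
            · exact absurd (h.trans heza.symm) (he hq₀adj.symm)
            · exact h
          by_cases hnone : ∀ p ∈ D₀, ¬ H.Adj p z
          · obtain ⟨hP, hres'⟩ := liftA hxmem hymem hsub hcl hDxy hd' e hres
              (fun p hp hadj => absurd hadj (hnone p hp))
            exact ⟨_, hP.proper he, hres', Relation.ReflTransGen.single hP⟩
          · push_neg at hnone
            obtain ⟨p₀, hp₀D, hp₀adj⟩ := hnone
            have hp₀col : e p₀ = a ∨ e p₀ = b := by
              obtain ⟨p', hp', rfl⟩ := hp₀D
              rw [hres p']
              exact hsub p' hp'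
            have hp₀b : e p₀ = b := by
              rcases hp₀col with h | h
              · exact absurd (h.trans heza.symm) (he hp₀adj)
              · exact h
            have hp₀q₀ : p₀ ≠ q₀ := fun h => hq₀D (h ▸ hp₀D)
            set N : Finset V := (H.neighborSet z).toFinset with hN
            have hNmem : ∀ w, w ∈ N ↔ H.Adj z w := by
              intro w
              simp [hN]
            have hNcard : N.card = (H.neighborSet z).ncard := by
              rw [Set.ncard_eq_toFinset_card']
            have hp₀N : p₀ ∈ N := (hNmem p₀).mpr hp₀adj.symm
            have hq₀N : q₀ ∈ N := (hNmem q₀).mpr hq₀adj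
            have himg : (N.image e).card + 2 ≤ k := by
              rcases hdegz with hd1 | ⟨hax, hay⟩
              · have := image_card_one_collision N e p₀ q₀ hp₀N hq₀N hp₀q₀
                  (hp₀b.trans hq₀b.symm)
                omega
              · have hxN : x ∈ N := (hNmem x).mpr hax
                have hyN : y ∈ N := (hNmem y).mpr hay
                by_cases hxb : e x = b
                · have hxyD₀ : (x ∈ D₀ ↔ y ∈ D₀) :=
                    (mem_image_val ⟨x, hxmem⟩).trans (hDxy.trans (mem_image_val ⟨y, hymem⟩).symm)
                  have hr : ∃ r, (r = p₀ ∨ r = q₀) ∧ r ≠ x ∧ r ≠ y := by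
                    by_cases h1 : p₀ ≠ x ∧ p₀ ≠ y
                    · exact ⟨p₀, Or.inl rfl, h1.1, h1.2⟩
                    · by_cases h2 : q₀ ≠ x ∧ q₀ ≠ y
                      · exact ⟨q₀, Or.inr rfl, h2.1, h2.2⟩
                      · exfalso
                        push_neg at h1 h2
                        by_cases hpx : p₀ = x
                        · subst hpx
                          have : q₀ = y := by
                            rcases Classical.em (q₀ = p₀) with h | h
                            · exact absurd h hp₀q₀.symm
                            · exact h2 h
                          subst this
                          exact hq₀D (hxyD₀.mp hp₀D)
                        · have hpy : p₀ = y := h1 hpx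
                          subst hpy
                          have : q₀ = x := by
                            rcases Classical.em (q₀ = x) with h | h
                            · exact h
                            · exact absurd (h2 h) hp₀q₀.symm
                          subst this
                          exact hq₀D (hxyD₀.mpr hp₀D)
                  obtain ⟨r, hr, hrx, hry⟩ := hr
                  have hrb : e r = b := by
                    rcases hr with rfl | rfl
                    · exact hp₀b
                    · exact hq₀b
                  have hrN : r ∈ N := by
                    rcases hr with rfl | rfl
                    · exact hp₀N
                    · exact hq₀N
                  have := image_card_two_collisions N e x r y r hxN hrN hyN hrN
                    (hxb.trans hrb.symm) ((hexy.symm.trans hxb).trans hrb.symm)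
                    hxy hrx hry hrx hry
                  omega
                · have hyb : e y ≠ b := fun h => hxb (hexy.trans h)
                  have := image_card_two_collisions N e p₀ q₀ x y hp₀N hq₀N hxN hyN
                    (hp₀b.trans hq₀b.symm) hexy
                    (fun h => hxb (h ▸ hp₀b)) (Ne.symm hp₀q₀)
                    (fun h => hxb (h ▸ hq₀b))
                    (fun h => hyb (by rw [h, hp₀b]))
                    (Ne.symm hxy)
                  omega
            obtain ⟨f, hf⟩ := exists_fresh (insert a (N.image e)) (by
              have := Finset.card_insert_le a (N.image e)
              omega)
            have hfa : f ≠ a := fun h => hf (by rw [h]; exact Finset.mem_insert_self a _)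
            have hfimg : f ∉ N.image e := fun h => hf (Finset.mem_insert_of_mem h)
            have hfb : f ≠ b := by
              intro h
              exact hfimg (h ▸ Finset.mem_image.mpr ⟨p₀, hp₀N, hp₀b⟩)
            have hfnb : ∀ q, H.Adj z q → e q ≠ f := by
              intro q hadj h
              exact hfimg (h ▸ Finset.mem_image.mpr ⟨q, (hNmem q).mpr hadj, rfl⟩)
            set e₁ : V → Fin k := PSwap k (e z) f ({z} : Set V) e with he₁def
            have hstep1 : PStep H k x y e e₁ := by
              refine ⟨e z, f, ({z} : Set V), ?_, ?_, ?_, rfl⟩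
              · intro w hw
                rw [Set.mem_singleton_iff] at hw
                subst hw
                exact Or.inl rfl
              · intro p hp q hadj hq
                rw [Set.mem_singleton_iff] at hp
                subst hp
                exfalso
                rcases hq with h | h
                · exact he hadj h.symm
                · exact hfnb q hadj h
              · simp [Set.mem_singleton_iff, hxz, hyz]
            have he₁ : IsProperColoring H k e₁ := hstep1.proper he
            have he₁res : ∀ w : ↥({z}ᶜ : Set V), e₁ ↑w = d w := by
              intro w
              rw [he₁def]
              unfold PSwap
              rw [if_neg (by simpa using val_ne_z w)]
              exact hres w
            have he₁z : e₁ z = f := by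
              rw [he₁def]
              unfold PSwap
              rw [if_pos (Set.mem_singleton z), Equiv.swap_apply_left]
            obtain ⟨hP2, hres2⟩ := liftA hxmem hymem hsub hcl hDxy hd' e₁ he₁res
              (by
                intro p hp hadj hcon
                rw [he₁z] at hcon
                rcases hcon with h | h
                · exact hfa h
                · exact hfb h)
            exact ⟨_, hP2.proper he₁, hres2,
              (Relation.ReflTransGen.single hstep1).tail hP2⟩
      rcases hez with hez | hez
      · exact hmain a b hab hez hsub hcl hd'
      · refine hmain b a (Ne.symm hab) hez ?_ ?_ ?_
        · intro w hw
          exact (hsub w hw).symm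
        · intro p hp q hadj hq
          exact hcl p hp q hadj hq.symm
        · rw [hd', pswap_comm]
  · obtain ⟨hP, hres'⟩ := liftA hxmem hymem hsub hcl hDxy hd' e hres
      (fun p hp hadj => hez)
    exact ⟨_, hP.proper he, hres', Relation.ReflTransGen.single hP⟩

lemma lift_chain [Fintype V] {H : SimpleGraph V} {k : ℕ} (hk : 4 ≤ k) {x y z : V}
    (hxz : x ≠ z) (hyz : y ≠ z) (hxy : x ≠ y)
    (hxmem : x ∈ ({z}ᶜ : Set V)) (hymem : y ∈ ({z}ᶜ : Set V))
    (hdegz : (H.neighborSet z).ncard ≤ k - 1 ∨ (H.Adj z x ∧ H.Adj z y))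
    (hdeg : (H.neighborSet z).ncard ≤ k)
    {d d' : ↥({z}ᶜ : Set V) → Fin k}
    (hchain : Relation.ReflTransGen
      (PStep (H.induce {z}ᶜ) k ⟨x, hxmem⟩ ⟨y, hymem⟩) d d')
    (hd : IsProperColoring (H.induce {z}ᶜ) k d)
    (hdxy : d ⟨x, hxmem⟩ = d ⟨y, hymem⟩)
    {e : V → Fin k} (he : IsProperColoring H k e)
    (hres : ∀ w : ↥({z}ᶜ : Set V), e ↑w = d w) :
    ∃ e', IsProperColoring H k e' ∧ (∀ w : ↥({z}ᶜ : Set V), e' ↑w = d' w) ∧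
      Relation.ReflTransGen (PStep H k x y) e e' := by
  induction hchain with
  | refl => exact ⟨e, he, hres, Relation.ReflTransGen.refl⟩
  | @tail d₁ d₂ hsteps hstep ih =>
    obtain ⟨e₁, he₁, hres₁, hrtg₁⟩ := ih
    have hd₁xy : d₁ ⟨x, hxmem⟩ = d₁ ⟨y, hymem⟩ := chain_pair hsteps hdxy
    have hexy : e₁ x = e₁ y := by
      have h1 := hres₁ ⟨x, hxmem⟩
      have h2 := hres₁ ⟨y, hymem⟩
      exact h1.trans (hd₁xy.trans h2.symm)
    obtain ⟨e₂, he₂, hres₂, hrtg₂⟩ := lift_step hk hxz hyz hxy hxmem hymem hdegz hdeg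
      hstep he₁ hres₁ hexy
    exact ⟨e₂, he₂, hres₂, hrtg₁.trans hrtg₂⟩

universe u_aux

lemma AUX {k : ℕ} (hk : 4 ≤ k) :
    ∀ (n : ℕ) {W : Type u_aux} [Fintype W] (H : SimpleGraph W) (x y : W),
    Fintype.card W ≤ n → x ≠ y → ¬H.Adj x y →
    (∀ w, (H.neighborSet w).ncard ≤ k) →
    (∀ S : Set W, ({x, y} : Set W) ⊆ S → S ≠ {x, y} → ∃ z ∈ S, z ≠ x ∧ z ≠ y ∧
        ((S ∩ H.neighborSet z).ncard ≤ k - 1 ∨ (H.Adj z x ∧ H.Adj z y))) →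
    ∀ c c' : W → Fin k, IsProperColoring H k c → IsProperColoring H k c' →
      c x = c y → c' x = c' y →
      Relation.ReflTransGen (PStep H k x y) c c' := by
  intro n
  induction n with
  | zero =>
    intro W _ H x y hcard hxy
    exfalso
    have : 0 < Fintype.card W := Fintype.card_pos_iff.mpr ⟨x⟩
    omega
  | succ n IH =>
    intro W _ H x y hcard hxy hnadj hdeg hfind c c' hc hc' hcxy hc'xy
    by_cases huniv : ∀ w : W, w = x ∨ w = y
    · by_cases hcc : c x = c' x
      · have : c = c' := by
          funext w
          rcases huniv w with rfl | rfl
          · exact hcc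
          · exact hcxy.symm.trans (hcc.trans hc'xy)
        rw [this]
      · refine Relation.ReflTransGen.single ⟨c x, c' x, Set.univ, ?_, ?_, ?_, ?_⟩
        · intro w _
          rcases huniv w with rfl | rfl
          · exact Or.inl rfl
          · exact Or.inl hcxy.symm
        · intro p _ q _ _
          trivial
        · simp
        · funext w
          unfold PSwap
          rw [if_pos (Set.mem_univ w)]
          rcases huniv w with rfl | rfl
          · rw [Equiv.swap_apply_left]
          · rw [← hcxy, ← hc'xy, Equiv.swap_apply_left]
    · have hune : (Set.univ : Set W) ≠ {x, y} := by
        intro h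
        apply huniv
        intro w
        have : w ∈ ({x, y} : Set W) := h ▸ Set.mem_univ w
        simpa using this
      obtain ⟨z, _, hzx, hzy, hdz⟩ := hfind Set.univ (by simp) hune
      rw [Set.univ_inter] at hdz
      have hxmem : x ∈ ({z}ᶜ : Set W) := fun h => hzx (Set.mem_singleton_iff.mp h).symm
      have hymem : y ∈ ({z}ᶜ : Set W) := fun h => hzy (Set.mem_singleton_iff.mp h).symm
      set H' := H.induce ({z}ᶜ : Set W) with hH'
      have hcard' : Fintype.card ↥({z}ᶜ : Set W) ≤ n := by
        have h1 : Fintype.card ↥({z}ᶜ : Set W) < Fintype.card W :=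
          Fintype.card_subtype_lt (x := z) (by simp)
        omega
      have hxy' : (⟨x, hxmem⟩ : ↥({z}ᶜ : Set W)) ≠ ⟨y, hymem⟩ :=
        fun h => hxy (congrArg Subtype.val h)
      have hnadj' : ¬H'.Adj ⟨x, hxmem⟩ ⟨y, hymem⟩ := hnadj
      have hdeg' : ∀ w' : ↥({z}ᶜ : Set W), (H'.neighborSet w').ncard ≤ k := by
        intro w'
        have hsub : Subtype.val '' (H'.neighborSet w') ⊆ H.neighborSet (w' : W) := by
          rintro _ ⟨u, hu, rfl⟩
          exact hu
        calc (H'.neighborSet w').ncard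
            = (Subtype.val '' (H'.neighborSet w')).ncard :=
              (Set.ncard_image_of_injective _ Subtype.coe_injective).symm
          _ ≤ (H.neighborSet (w' : W)).ncard := Set.ncard_le_ncard hsub (Set.toFinite _)
          _ ≤ k := hdeg _
      have hfind' : ∀ S' : Set ↥({z}ᶜ : Set W),
          ({⟨x, hxmem⟩, ⟨y, hymem⟩} : Set ↥({z}ᶜ : Set W)) ⊆ S' →
          S' ≠ {⟨x, hxmem⟩, ⟨y, hymem⟩} →
          ∃ z₁ ∈ S', z₁ ≠ ⟨x, hxmem⟩ ∧ z₁ ≠ ⟨y, hymem⟩ ∧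
            ((S' ∩ H'.neighborSet z₁).ncard ≤ k - 1 ∨
              (H'.Adj z₁ ⟨x, hxmem⟩ ∧ H'.Adj z₁ ⟨y, hymem⟩)) := by
        intro S' hS'sub hS'ne
        set S : Set W := Subtype.val '' S' with hSdef
        have hSsub : ({x, y} : Set W) ⊆ S := by
          intro w hw
          rcases hw with h | h
          · rw [h]
            exact ⟨⟨x, hxmem⟩, hS'sub (Or.inl rfl), rfl⟩
          · rw [Set.mem_singleton_iff] at h
            rw [h]
            exact ⟨⟨y, hymem⟩, hS'sub (Or.inr rfl), rfl⟩
        have hSne : S ≠ ({x, y} : Set W) := by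
          intro h
          apply hS'ne
          ext w'
          constructor
          · intro hw'
            have : (w' : W) ∈ S := ⟨w', hw', rfl⟩
            rw [h] at this
            rcases this with h1 | h1
            · exact Or.inl (Subtype.ext h1)
            · rw [Set.mem_singleton_iff] at h1
              exact Or.inr (Set.mem_singleton_iff.mpr (Subtype.ext h1))
          · intro hw'
            rcases hw' with h | h
            · rw [h]
              exact hS'sub (Or.inl rfl)
            · rw [Set.mem_singleton_iff] at h
              rw [h]
              exact hS'sub (Or.inr rfl)
        obtain ⟨z₁, hz₁S, hz₁x, hz₁y, hdz₁⟩ := hfind S hSsub hSne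
        obtain ⟨z₁', hz₁'S', hval⟩ := hz₁S
        subst hval
        refine ⟨z₁', hz₁'S', fun h => hz₁x (congrArg Subtype.val h),
          fun h => hz₁y (congrArg Subtype.val h), ?_⟩
        rcases hdz₁ with hle | ⟨h1, h2⟩
        · left
          have hsub2 : Subtype.val '' (S' ∩ H'.neighborSet z₁') ⊆
              S ∩ H.neighborSet (z₁' : W) := by
            rintro _ ⟨u, ⟨hu1, hu2⟩, rfl⟩
            exact ⟨⟨u, hu1, rfl⟩, hu2⟩
          calc (S' ∩ H'.neighborSet z₁').ncard
              = (Subtype.val '' (S' ∩ H'.neighborSet z₁')).ncard :=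
                (Set.ncard_image_of_injective _ Subtype.coe_injective).symm
            _ ≤ (S ∩ H.neighborSet (z₁' : W)).ncard :=
                Set.ncard_le_ncard hsub2 (Set.toFinite _)
            _ ≤ k - 1 := hle
        · exact Or.inr ⟨h1, h2⟩
      have hchain := IH H' ⟨x, hxmem⟩ ⟨y, hymem⟩ hcard' hxy' hnadj' hdeg' hfind'
        (fun w => c ↑w) (fun w => c' ↑w)
        (fun p q hadj => hc hadj) (fun p q hadj => hc' hadj) hcxy hc'xy
      obtain ⟨e', he', hrese', hrtg⟩ := lift_chain hk
        (fun h => hzx h.symm) (fun h => hzy h.symm) hxy hxmem hymem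
        hdz (hdeg z) hchain (fun p q hadj => hc hadj) hcxy hc (fun w => rfl)
      by_cases hlast : e' z = c' z
      · have : e' = c' := by
          funext w
          by_cases hwz : w = z
          · subst hwz
            exact hlast
          · exact hrese' ⟨w, hwz⟩
        rw [← this]
        exact hrtg
      · refine hrtg.tail ⟨e' z, c' z, ({z} : Set W), ?_, ?_, ?_, ?_⟩
        · intro w hw
          rw [Set.mem_singleton_iff] at hw
          subst hw
          exact Or.inl rfl
        · intro p hp q hadj hq
          exfalso
          rw [Set.mem_singleton_iff] at hp
          rw [hp] at hadj
          have hqz : q ≠ z := hadj.ne'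
          have hq1 : e' q = c' q := hrese' ⟨q, hqz⟩
          rcases hq with h | h
          · exact he' hadj h.symm
          · exact hc' hadj (hq1.symm.trans h).symm
        · constructor
          · intro h
            exact absurd (Set.mem_singleton_iff.mp h) (fun hh => hzx hh.symm)
          · intro h
            exact absurd (Set.mem_singleton_iff.mp h) (fun hh => hzy hh.symm)
        · funext w
          unfold PSwap
          by_cases hwz : w ∈ ({z} : Set W)
          · rw [if_pos hwz]
            rw [Set.mem_singleton_iff] at hwz
            subst hwz
            rw [Equiv.swap_apply_left]
          · rw [if_neg hwz]
            rw [Set.mem_singleton_iff] at hwz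
            exact (hrese' ⟨w, hwz⟩).symm

lemma pigeon [Fintype V] {G : SimpleGraph V} [DecidableRel G.Adj] {k : ℕ}
    (hreg : G.IsRegularOfDegree k) (hk : 0 < k) {c : V → Fin k}
    (hc : IsProperColoring G k c) (u : V) :
    ∃ t1 t2, G.Adj u t1 ∧ G.Adj u t2 ∧ t1 ≠ t2 ∧ ¬G.Adj t1 t2 ∧ c t1 = c t2 := by
  have hmaps : ∀ t ∈ G.neighborFinset u, c t ∈ Finset.univ.erase (c u) := by
    intro t ht
    exact Finset.mem_erase.mpr ⟨(hc ((SimpleGraph.mem_neighborFinset _ _ _).mp ht)).symm,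
      Finset.mem_univ _⟩
  have hcard : (Finset.univ.erase (c u)).card < (G.neighborFinset u).card := by
    rw [Finset.card_erase_of_mem (Finset.mem_univ _), Finset.card_univ, Fintype.card_fin]
    have : (G.neighborFinset u).card = k := hreg u
    omega
  obtain ⟨t1, ht1, t2, ht2, hne, heq⟩ :=
    Finset.exists_ne_map_eq_of_card_lt_of_maps_to hcard hmaps
  exact ⟨t1, t2, (SimpleGraph.mem_neighborFinset _ _ _).mp ht1,
    (SimpleGraph.mem_neighborFinset _ _ _).mp ht2, hne,
    fun hadj => hc hadj heq, heq⟩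

/-- let `G` be 3-connected and `k`-regular (`k ≥ 4`), let `(w1, w2)` be
an eligible pair of neighbours of `v` with neither `w1` nor `w2` adjacent to `u`. If
for every eligible pair `(t1, t2)` of neighbours of `u` there is a proper
`k`-colouring with `t1, t2` coloured alike and `w1, w2` coloured alike, then the
proper `k`-colourings of `G` form a single Kempe class. -/
theorem stmt19 {V : Type*} [Fintype V] (k : ℕ) (hk : 4 ≤ k) (G : SimpleGraph V)
    [DecidableRel G.Adj] (hreg : G.IsRegularOfDegree k) (h3c : ThreeConnected G)
    (u v : V) (w1 w2 : V) (hw1 : G.Adj v w1) (hw2 : G.Adj v w2)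
    (hwne : w1 ≠ w2) (hwnadj : ¬ G.Adj w1 w2)
    (hw1u : ¬ G.Adj u w1) (hw2u : ¬ G.Adj u w2)
    (hpairs : ∀ t1 t2 : V, G.Adj u t1 → G.Adj u t2 → t1 ≠ t2 → ¬ G.Adj t1 t2 →
      ∃ c : V → Fin k, IsProperColoring G k c ∧ c t1 = c t2 ∧ c w1 = c w2) :
    KempeClass G k := by
  intro c c' hc hc'
  have hncard : ∀ w, (G.neighborSet w).ncard = k := by
    intro w
    rw [Set.ncard_eq_toFinset_card', Set.toFinset_card,
      SimpleGraph.card_neighborSet_eq_degree]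
    exact hreg w
  have hdegV : ∀ w, (G.neighborSet w).ncard ≤ k := fun w => (hncard w).le
  have hfind : ∀ (x y m : V), G.Adj m x → G.Adj m y →
      ∀ S : Set V, ({x, y} : Set V) ⊆ S → S ≠ {x, y} →
      ∃ z ∈ S, z ≠ x ∧ z ≠ y ∧
        ((S ∩ G.neighborSet z).ncard ≤ k - 1 ∨ (G.Adj z x ∧ G.Adj z y)) := by
    intro x y m hmx hmy S hsub hne
    by_cases hSuniv : S = Set.univ
    · exact ⟨m, hSuniv ▸ Set.mem_univ m, hmx.ne, hmy.ne, Or.inr ⟨hmx, hmy⟩⟩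
    · obtain ⟨w₀, hw₀⟩ := (Set.ne_univ_iff_exists_notMem S).mp hSuniv
      have hxS : x ∈ S := hsub (Or.inl rfl)
      have hyS : y ∈ S := hsub (Or.inr rfl)
      have hw₀x : w₀ ≠ x := fun h => hw₀ (h ▸ hxS)
      have hw₀y : w₀ ≠ y := fun h => hw₀ (h ▸ hyS)
      have hxyncard : ({x, y} : Set V).ncard ≤ 2 := by
        have h1 := Set.ncard_insert_le x ({y} : Set V)
        rw [Set.ncard_singleton] at h1
        omega
      have hconn := h3c.2 {x, y} hxyncard
      have hT : ∃ s ∈ S, s ∉ ({x, y} : Set V) := by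
        by_contra hcon
        push_neg at hcon
        exact hne (Set.Subset.antisymm hcon hsub)
      obtain ⟨s₀, hs₀S, hs₀xy⟩ := hT
      have hw₀mem : w₀ ∈ (({x, y} : Set V)ᶜ) := by
        simp [hw₀x, hw₀y]
      obtain ⟨p, hp, q, hq, hadj⟩ := crossing hconn
        (A := {w : ↥(({x, y} : Set V)ᶜ) | (w : V) ∈ S})
        ⟨⟨s₀, hs₀xy⟩, hs₀S⟩ ⟨⟨w₀, hw₀mem⟩, hw₀⟩
      have hpx : (p : V) ≠ x := fun h => p.2 (Or.inl h)
      have hpy : (p : V) ≠ y := fun h => p.2 (Or.inr (Set.mem_singleton_iff.mpr h))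
      refine ⟨↑p, hp, hpx, hpy, Or.inl ?_⟩
      have hqN : (q : V) ∈ G.neighborSet (p : V) := hadj
      have hsub2 : S ∩ G.neighborSet (p : V) ⊆ G.neighborSet (p : V) \ {(q : V)} := by
        rintro w ⟨hw1', hw2'⟩
        exact ⟨hw2', fun hh => hq (show (q : V) ∈ S from Set.mem_singleton_iff.mp hh ▸ hw1')⟩
      calc (S ∩ G.neighborSet (p : V)).ncard
          ≤ (G.neighborSet (p : V) \ {(q : V)}).ncard :=
            Set.ncard_le_ncard hsub2 (Set.toFinite _)
        _ = (G.neighborSet (p : V)).ncard - 1 :=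
            Set.ncard_diff_singleton_of_mem hqN
        _ ≤ k - 1 := by rw [hncard]
  obtain ⟨t1, t2, hut1, hut2, ht12, htnadj, hct⟩ := pigeon hreg (by omega) hc u
  obtain ⟨c₀, hc₀, hc₀t, hc₀w⟩ := hpairs t1 t2 hut1 hut2 ht12 htnadj
  obtain ⟨t1', t2', hut1', hut2', ht12', htnadj', hct'⟩ := pigeon hreg (by omega) hc' u
  obtain ⟨c₀', hc₀', hc₀t', hc₀w'⟩ := hpairs t1' t2' hut1' hut2' ht12' htnadj'
  have chain1 := AUX hk (Fintype.card V) G t1 t2 le_rfl ht12 htnadj hdegV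
    (hfind t1 t2 u hut1 hut2) c c₀ hc hc₀ hct hc₀t
  have chain2 := AUX hk (Fintype.card V) G w1 w2 le_rfl hwne hwnadj hdegV
    (hfind w1 w2 v hw1 hw2) c₀ c₀' hc₀ hc₀' hc₀w hc₀w'
  have chain3 := AUX hk (Fintype.card V) G t1' t2' le_rfl ht12' htnadj' hdegV
    (hfind t1' t2' u hut1' hut2') c' c₀' hc' hc₀' hct' hc₀t'
  have sym3 : Relation.ReflTransGen (PStep G k t1' t2') c₀' c' :=
    by
      haveI : Std.Symm (PStep G k t1' t2') := ⟨fun _ _ h => PStep.symm h⟩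
      exact Std.Symm.symm _ _ chain3
  exact ((chain_kempe chain1).trans (chain_kempe chain2)).trans (chain_kempe sym3)
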